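/- For real x with |x| < 1, ∑_{n=1}^∞ (H̄_n/n) x^n = -log(2) log(1-x) + Li_2((1-x)/2) - Li_2(1/2) - Li_2(-x). -/

import Mathlib

open Real Filter Finset

noncomputable def Li (m : ℕ) (x : ℝ) : ℝ := ∑' n : ℕ, x ^ (n + 1) / (n + 1 : ℝ) ^ m

noncomputable def H (p n : ℕ) : ℝ := ∑ j ∈ Finset.Icc 1 n, 1 / (j : ℝ) ^ p

noncomputable def Hbar (p n : ℕ) : ℝ := ∑ j ∈ Finset.Icc 1 n, (-1 : ℝ) ^ (j - 1) / (j : ℝ) ^ p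

lemma sum_Icc_to_range (f : ℕ → ℝ) (N : ℕ) :
    ∑ n ∈ Finset.Icc 1 N, f n = ∑ k ∈ Finset.range N, f (k + 1) := by
  induction N with
  | zero => simp
  | succ N ih =>
      rw [Finset.sum_Icc_succ_top (by omega), ih, Finset.sum_range_succ]

lemma hbar_succ (n : ℕ) :
    Hbar 1 (n + 1) = ∑ k ∈ Finset.range (n + 1), (-1 : ℝ) ^ k / (k + 1 : ℝ) := by
  rw [Hbar, sum_Icc_to_range]
  refine Finset.sum_congr rfl fun k _ => ?_
  push_cast
  simp

lemma hbar_abs_le (n : ℕ) : |Hbar 1 n| ≤ n := by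
  rw [Hbar]
  calc |∑ j ∈ Finset.Icc 1 n, (-1 : ℝ) ^ (j - 1) / (j : ℝ) ^ 1|
      ≤ ∑ j ∈ Finset.Icc 1 n, |(-1 : ℝ) ^ (j - 1) / (j : ℝ) ^ 1| :=
        Finset.abs_sum_le_sum_abs _ _
    _ ≤ ∑ _j ∈ Finset.Icc 1 n, (1 : ℝ) := by
        refine Finset.sum_le_sum fun j hj => ?_
        have hj1 : 1 ≤ j := (Finset.mem_Icc.1 hj).1
        rw [abs_div, abs_pow, abs_neg, abs_one, one_pow, pow_one, abs_of_nonneg (by positivity)]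
        rw [div_le_one (by exact_mod_cast hj1)]
        exact_mod_cast hj1
    _ ≤ n := by simp [Nat.card_Icc]

noncomputable def D2 (y : ℝ) : ℝ := ∑' n : ℕ, y ^ n / (n + 1 : ℝ)

lemma summable_np1_geo {r : ℝ} (hr : |r| < 1) :
    Summable (fun n : ℕ => ((n : ℝ) + 1) * r ^ n) := by
  have h1 : Summable (fun n : ℕ => (n : ℝ) ^ 1 * r ^ n) :=
    summable_pow_mul_geometric_of_norm_lt_one 1 (by rwa [Real.norm_eq_abs])
  have h2 : Summable (fun n : ℕ => r ^ n) := summable_geometric_of_abs_lt_one hr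
  simpa [add_mul, pow_one] using h1.add h2

lemma summable_D2 {y : ℝ} (hy : |y| < 1) :
    Summable (fun n : ℕ => y ^ n / ((n : ℝ) + 1)) := by
  refine Summable.of_norm ?_
  refine Summable.of_nonneg_of_le (fun n => norm_nonneg _) (fun n => ?_)
    (summable_geometric_of_abs_lt_one (by rwa [abs_abs]) : Summable fun n : ℕ => |y| ^ n)
  rw [Real.norm_eq_abs, abs_div, abs_pow]
  have : (1 : ℝ) ≤ |(n : ℝ) + 1| := by
    rw [abs_of_nonneg (by positivity)]; linarith [Nat.cast_nonneg (α := ℝ) n]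
  calc |y| ^ n / |(n : ℝ) + 1| ≤ |y| ^ n / 1 := by
        apply div_le_div_of_nonneg_left (by positivity) one_pos this
    _ = |y| ^ n := div_one _

lemma D2_eq {y : ℝ} (hy : |y| < 1) (hy0 : y ≠ 0) : D2 y = -Real.log (1 - y) / y := by
  have hlog : HasSum (fun n : ℕ => y ^ (n + 1) / ((n : ℝ) + 1)) (-Real.log (1 - y)) :=
    hasSum_pow_div_log_of_abs_lt_one hy
  have h2 : HasSum (fun n : ℕ => y * (y ^ n / ((n : ℝ) + 1))) (y * D2 y) :=
    (summable_D2 hy).hasSum.mul_left y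
  have h3 : HasSum (fun n : ℕ => y ^ (n + 1) / ((n : ℝ) + 1)) (y * D2 y) := by
    convert h2 using 2 with n
    ring
  have h4 : y * D2 y = -Real.log (1 - y) := h3.unique hlog
  rw [eq_div_iff hy0, ← h4]; ring

lemma D2_zero : D2 0 = 1 := by
  rw [D2, tsum_eq_single 0]
  · norm_num
  · intro n hn
    simp [zero_pow hn]

lemma D2_half : D2 (1 / 2) = 2 * Real.log 2 := by
  rw [D2_eq (by rw [abs_of_nonneg] <;> norm_num) (by norm_num)]
  rw [show (1 : ℝ) - 1 / 2 = 2⁻¹ by norm_num, Real.log_inv]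
  ring

lemma hasSum_log_one_add {x : ℝ} (hx : |x| < 1) :
    HasSum (fun k : ℕ => (-1 : ℝ) ^ k * x ^ (k + 1) / ((k : ℝ) + 1)) (Real.log (1 + x)) := by
  have h := (hasSum_pow_div_log_of_abs_lt_one (x := -x) (by rwa [abs_neg])).neg
  rw [show (1 : ℝ) - -x = 1 + x by ring, neg_neg] at h
  convert h using 2 with k
  · rfl
  rw [neg_pow x (k + 1), pow_succ]
  ring

lemma hasSum_hbar_mul {x : ℝ} (hx : |x| < 1) :
    HasSum (fun n : ℕ => Hbar 1 (n + 1) * x ^ (n + 1)) (Real.log (1 + x) * (1 - x)⁻¹) := by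
  set f : ℕ → ℝ := fun k => (-1 : ℝ) ^ k * x ^ (k + 1) / ((k : ℝ) + 1) with hf
  set g : ℕ → ℝ := fun k => x ^ k with hg
  have hxgeo : Summable (fun k : ℕ => |x| ^ k) :=
    summable_geometric_of_abs_lt_one (by rwa [abs_abs])
  have hf_norm : Summable fun k => ‖f k‖ := by
    refine Summable.of_nonneg_of_le (fun n => norm_nonneg _) (fun k => ?_) hxgeo
    rw [hf, Real.norm_eq_abs, abs_div, abs_mul, abs_pow, abs_pow, abs_neg, abs_one, one_pow,
      one_mul, abs_of_nonneg (show (0:ℝ) ≤ (k:ℝ)+1 by positivity)]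
    calc |x| ^ (k + 1) / ((k : ℝ) + 1) ≤ |x| ^ (k + 1) / 1 := by
          apply div_le_div_of_nonneg_left (by positivity) one_pos
          linarith [Nat.cast_nonneg (α := ℝ) k]
      _ = |x| ^ k * |x| := by rw [div_one, pow_succ]
      _ ≤ |x| ^ k * 1 := by
          apply mul_le_mul_of_nonneg_left (le_of_lt hx) (by positivity)
      _ = |x| ^ k := mul_one _
  have hg_norm : Summable fun k => ‖g k‖ := by
    simpa [hg, Real.norm_eq_abs, abs_pow] using hxgeo
  have hfs : HasSum f (Real.log (1 + x)) := hasSum_log_one_add hx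
  have hgs : HasSum g (1 - x)⁻¹ := hasSum_geometric_of_abs_lt_one hx
  have key := hasSum_sum_range_mul_of_summable_norm hf_norm hg_norm
  rw [hfs.tsum_eq, hgs.tsum_eq] at key
  convert key using 2 with n
  · rfl
  rw [hbar_succ, Finset.sum_mul]
  refine Finset.sum_congr rfl fun k hk => ?_
  have hkn : k ≤ n := Nat.lt_succ_iff.1 (Finset.mem_range.1 hk)
  rw [hf, hg]
  have hpow : x ^ (k + 1) * x ^ (n - k) = x ^ (n + 1) := by
    rw [← pow_add]
    congr 1
    omega
  field_simp
  rw [← hpow]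

lemma hasDerivAt_Li2 {y : ℝ} (hy : |y| < 1) : HasDerivAt (Li 2) (D2 y) y := by
  set r : ℝ := (1 + |y|) / 2 with hr
  have hy0 := abs_nonneg y
  have hr0 : 0 < r := by rw [hr]; linarith
  have hr1 : r < 1 := by rw [hr]; linarith
  have hyr : |y| < r := by rw [hr]; linarith
  have hrabs : |r| < 1 := by rwa [abs_of_nonneg hr0.le]
  have main := hasDerivAt_tsum_of_isPreconnected
    (u := fun n : ℕ => r ^ n)
    (g := fun (n : ℕ) (z : ℝ) => z ^ (n + 1) / ((n : ℝ) + 1) ^ 2)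
    (g' := fun (n : ℕ) (z : ℝ) => z ^ n / ((n : ℝ) + 1))
    (y₀ := 0) (y := y)
    (summable_geometric_of_abs_lt_one hrabs) (isOpen_Ioo (a := -r) (b := r))
    (convex_Ioo _ _).isPreconnected ?_ ?_ ?_ ?_ ?_
  · exact main
  · intro n z hz
    have h := (hasDerivAt_pow (n + 1) z).div_const (((n : ℝ) + 1) ^ 2)
    convert h using 1
    · rfl
    have hn : ((n : ℝ) + 1) ≠ 0 := by positivity
    have hn' : ((n : ℝ) + 1) ^ 2 ≠ 0 := by positivity
    push_cast
    field_simp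
  · intro n z hz
    obtain ⟨hz1, hz2⟩ := hz
    have hzr : |z| ≤ r := le_of_lt (abs_lt.2 ⟨hz1, hz2⟩)
    rw [Real.norm_eq_abs, abs_div, abs_pow, abs_of_nonneg (show (0:ℝ) ≤ (n:ℝ)+1 by positivity)]
    calc |z| ^ n / ((n : ℝ) + 1) ≤ |z| ^ n / 1 := by
          apply div_le_div_of_nonneg_left (by positivity) one_pos
          linarith [Nat.cast_nonneg (α := ℝ) n]
      _ = |z| ^ n := div_one _
      _ ≤ r ^ n := pow_le_pow_left₀ (abs_nonneg z) hzr n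
  · exact Set.mem_Ioo.2 ⟨by linarith, hr0⟩
  · convert summable_zero with n
    simp
  · exact Set.mem_Ioo.2 (abs_lt.1 hyr)

noncomputable def FF (x : ℝ) : ℝ := ∑' n : ℕ, Hbar 1 (n + 1) * x ^ (n + 1) / ((n : ℝ) + 1)
noncomputable def SF (x : ℝ) : ℝ := ∑' n : ℕ, Hbar 1 (n + 1) * x ^ n

lemma hasDerivAt_FF {x : ℝ} (hx : |x| < 1) : HasDerivAt FF (SF x) x := by
  set r : ℝ := (1 + |x|) / 2 with hr
  have hx0 := abs_nonneg x
  have hr0 : 0 < r := by rw [hr]; linarith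
  have hr1 : r < 1 := by rw [hr]; linarith
  have hxr : |x| < r := by rw [hr]; linarith
  have hrabs : |r| < 1 := by rwa [abs_of_nonneg hr0.le]
  have main := hasDerivAt_tsum_of_isPreconnected
    (u := fun n : ℕ => ((n : ℝ) + 1) * r ^ n)
    (g := fun (n : ℕ) (z : ℝ) => Hbar 1 (n + 1) * z ^ (n + 1) / ((n : ℝ) + 1))
    (g' := fun (n : ℕ) (z : ℝ) => Hbar 1 (n + 1) * z ^ n)
    (y₀ := 0) (y := x)
    (summable_np1_geo hrabs) (isOpen_Ioo (a := -r) (b := r))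
    (convex_Ioo _ _).isPreconnected ?_ ?_ ?_ ?_ ?_
  · exact main
  · intro n z hz
    have h := ((hasDerivAt_pow (n + 1) z).const_mul (Hbar 1 (n + 1))).div_const ((n : ℝ) + 1)
    convert h using 1
    · rfl
    have hn : ((n : ℝ) + 1) ≠ 0 := by positivity
    push_cast
    field_simp
  · intro n z hz
    obtain ⟨hz1, hz2⟩ := hz
    have hzr : |z| ≤ r := le_of_lt (abs_lt.2 ⟨hz1, hz2⟩)
    rw [Real.norm_eq_abs, abs_mul, abs_pow]
    have h1 : |Hbar 1 (n + 1)| ≤ (n : ℝ) + 1 := by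
      have := hbar_abs_le (n + 1)
      push_cast at this
      linarith
    have h2 : |z| ^ n ≤ r ^ n := pow_le_pow_left₀ (abs_nonneg z) hzr n
    exact mul_le_mul h1 h2 (by positivity) (by positivity)
  · exact Set.mem_Ioo.2 ⟨by linarith, hr0⟩
  · convert summable_zero with n
    simp
  · exact Set.mem_Ioo.2 (abs_lt.1 hxr)

noncomputable def GG (x : ℝ) : ℝ :=
  -Real.log 2 * Real.log (1 - x) + Li 2 ((1 - x) / 2) - Li 2 (1 / 2) - Li 2 (-x)

lemma hasDerivAt_GG {x : ℝ} (hx : |x| < 1) :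
    HasDerivAt GG (-Real.log 2 * ((1 - x)⁻¹ * (-1)) + D2 ((1 - x) / 2) * (-(1 / 2))
      - D2 (-x) * (-1)) x := by
  obtain ⟨hx1, hx2⟩ := abs_lt.1 hx
  have h1x : (0 : ℝ) < 1 - x := by linarith
  have hinner1 : HasDerivAt (fun x : ℝ => 1 - x) (-1) x := by
    simpa using (hasDerivAt_id x).const_sub 1
  have hlog : HasDerivAt (fun x : ℝ => Real.log (1 - x)) ((1 - x)⁻¹ * (-1)) x :=
    (Real.hasDerivAt_log (ne_of_gt h1x)).comp x hinner1
  have hA : HasDerivAt (fun x : ℝ => -Real.log 2 * Real.log (1 - x))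
      (-Real.log 2 * ((1 - x)⁻¹ * (-1))) x := hlog.const_mul _
  have hinner2 : HasDerivAt (fun x : ℝ => (1 - x) / 2) (-(1 / 2)) x := by
    have := hinner1.div_const 2
    convert this using 1
    · rfl
    · rfl
    norm_num
  have habs2 : |(1 - x) / 2| < 1 := by
    rw [abs_of_pos (by linarith)]; linarith
  have hB : HasDerivAt (fun x : ℝ => Li 2 ((1 - x) / 2)) (D2 ((1 - x) / 2) * (-(1 / 2))) x :=
    HasDerivAt.comp (h₂ := Li 2) x (hasDerivAt_Li2 habs2) hinner2
  have habs3 : |(-x)| < 1 := by rwa [abs_neg]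
  have hD : HasDerivAt (fun x : ℝ => Li 2 (-x)) (D2 (-x) * (-1)) x :=
    (hasDerivAt_Li2 habs3).comp x (hasDerivAt_neg x)
  exact ((hA.add hB).sub_const (Li 2 (1 / 2))).sub hD

lemma SF_eq {x : ℝ} (hx : |x| < 1) :
    SF x = -Real.log 2 * ((1 - x)⁻¹ * (-1)) + D2 ((1 - x) / 2) * (-(1 / 2))
      - D2 (-x) * (-1) := by
  obtain ⟨hx1, hx2⟩ := abs_lt.1 hx
  have h1x : (0 : ℝ) < 1 - x := by linarith
  have h1px : (0 : ℝ) < 1 + x := by linarith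
  by_cases hx0 : x = 0
  · subst hx0
    have hSF : SF 0 = 1 := by
      rw [SF, tsum_eq_single 0]
      · simp [Hbar]
      · intro n hn
        simp [zero_pow hn]
    rw [hSF]
    norm_num [D2_zero, D2_half]
    ring
  · have hsum := (hasSum_hbar_mul hx).mul_left x⁻¹
    have hsum2 : HasSum (fun n : ℕ => Hbar 1 (n + 1) * x ^ n)
        (x⁻¹ * (Real.log (1 + x) * (1 - x)⁻¹)) := by
      convert hsum using 2 with n
      · rfl
      rw [pow_succ]
      field_simp
    have hSF : SF x = x⁻¹ * (Real.log (1 + x) * (1 - x)⁻¹) := hsum2.tsum_eq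
    have hD2x : D2 (-x) = -Real.log (1 + x) / (-x) := by
      rw [D2_eq (by rwa [abs_neg]) (neg_ne_zero.2 hx0), show (1 : ℝ) - -x = 1 + x by ring]
    have habs2 : |(1 - x) / 2| < 1 := by
      rw [abs_of_pos (by linarith)]; linarith
    have hD2h : D2 ((1 - x) / 2) = -Real.log ((1 + x) / 2) / ((1 - x) / 2) := by
      rw [D2_eq habs2 (by positivity), show (1 : ℝ) - (1 - x) / 2 = (1 + x) / 2 by ring]
    have hlogd : Real.log ((1 + x) / 2) = Real.log (1 + x) - Real.log 2 :=
      Real.log_div (ne_of_gt h1px) two_ne_zero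
    rw [hSF, hD2x, hD2h, hlogd]
    field_simp
    ring

lemma FF_eq_GG {x : ℝ} (hx : |x| < 1) : FF x = GG x := by
  have key : ∀ y ∈ Set.Ioo (-1 : ℝ) 1, HasDerivAt (fun z => FF z - GG z) 0 y := by
    intro y hy
    have hy' : |y| < 1 := abs_lt.2 ⟨hy.1, hy.2⟩
    have h := (hasDerivAt_FF hy').sub (hasDerivAt_GG hy')
    rwa [SF_eq hy', sub_self] at h
  have hconv : Convex ℝ (Set.Ioo (-1 : ℝ) 1) := convex_Ioo _ _
  have hdiff : DifferentiableOn ℝ (fun z => FF z - GG z) (Set.Ioo (-1 : ℝ) 1) :=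
    fun y hy => ((key y hy).differentiableAt).differentiableWithinAt
  have hfd : ∀ y ∈ Set.Ioo (-1 : ℝ) 1,
      fderivWithin ℝ (fun z => FF z - GG z) (Set.Ioo (-1 : ℝ) 1) y = 0 := by
    intro y hy
    rw [fderivWithin_of_isOpen isOpen_Ioo hy, (key y hy).hasFDerivAt.fderiv]
    ext t
    simp
  have hF0 : FF 0 = 0 := by
    rw [FF]
    convert tsum_zero with n
    simp
  have hLi0 : Li 2 (0 : ℝ) = 0 := by
    rw [Li]
    convert tsum_zero with n
    simp
  have hG0 : GG 0 = 0 := by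
    rw [GG]
    norm_num [hLi0]
  have hx' := abs_lt.1 hx
  have hc : FF x - GG x = FF 0 - GG 0 :=
    hconv.is_const_of_fderivWithin_eq_zero hdiff hfd
      (Set.mem_Ioo.2 ⟨hx'.1, hx'.2⟩) (Set.mem_Ioo.2 (by norm_num))
  rw [hF0, hG0, sub_zero] at hc
  linarith

theorem stmt12 (x : ℝ) (hx : |x| < 1) :
    Filter.Tendsto (fun N => ∑ n ∈ Finset.Icc 1 N, Hbar 1 n / (n : ℝ) * x ^ n)
      Filter.atTop
      (nhds (-Real.log 2 * Real.log (1 - x) + Li 2 ((1 - x) / 2)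
        - Li 2 (1 / 2) - Li 2 (-x))) := by
  have hxgeo : Summable (fun n : ℕ => |x| ^ (n + 1)) := by
    have h := summable_geometric_of_abs_lt_one (show |(|x|)| < 1 by rwa [abs_abs])
    exact (summable_nat_add_iff 1).2 h
  have hsummable : Summable (fun n : ℕ => Hbar 1 (n + 1) * x ^ (n + 1) / ((n : ℝ) + 1)) := by
    refine Summable.of_norm (Summable.of_nonneg_of_le (fun n => norm_nonneg _)
      (fun n => ?_) hxgeo)
    rw [Real.norm_eq_abs, abs_div, abs_mul, abs_pow,
      abs_of_nonneg (show (0 : ℝ) ≤ (n : ℝ) + 1 by positivity)]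
    have h1 : |Hbar 1 (n + 1)| ≤ (n : ℝ) + 1 := by
      have := hbar_abs_le (n + 1)
      push_cast at this
      linarith
    rw [div_le_iff₀ (show (0 : ℝ) < (n : ℝ) + 1 by positivity)]
    calc |Hbar 1 (n + 1)| * |x| ^ (n + 1) ≤ ((n : ℝ) + 1) * |x| ^ (n + 1) :=
          mul_le_mul_of_nonneg_right h1 (by positivity)
      _ = |x| ^ (n + 1) * ((n : ℝ) + 1) := by ring
  have hhs : HasSum (fun n : ℕ => Hbar 1 (n + 1) / ((n : ℝ) + 1) * x ^ (n + 1)) (FF x) := by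
    have h := hsummable.hasSum
    rw [show (∑' n : ℕ, Hbar 1 (n + 1) * x ^ (n + 1) / ((n : ℝ) + 1)) = FF x from rfl] at h
    convert h using 2 with n
    ring
  have ht := hhs.tendsto_sum_nat
  rw [FF_eq_GG hx] at ht
  have heq : ∀ N, ∑ n ∈ Finset.Icc 1 N, Hbar 1 n / (n : ℝ) * x ^ n
      = ∑ k ∈ Finset.range N, Hbar 1 (k + 1) / ((k : ℝ) + 1) * x ^ (k + 1) := by
    intro N
    rw [sum_Icc_to_range]
    refine Finset.sum_congr rfl fun k _ => ?_
    push_cast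
    ring
  have goalEq : (-Real.log 2 * Real.log (1 - x) + Li 2 ((1 - x) / 2)
      - Li 2 (1 / 2) - Li 2 (-x)) = GG x := rfl
  rw [goalEq]
  exact Filter.Tendsto.congr (fun N => (heq N).symm) ht
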